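/- Let N ≥ 2, let Δ_C be the degree sequence of the path (chain) on N vertices (namely (2, 2, …, 2, 1, 1) for N ≥ 3 and (1,1) for N = 2), and let M be a connected simple graph on N vertices that is not a path. Then Δ_C ≺ Δ_M, i.e., the degree sequence of the chain is strictly majorized by the degree sequence of M. -/

import Mathlib

/-- Degree of a vertex `v` in a simple graph `G` on a finite vertex set. -/
noncomputable def deg {V : Type*} [Fintype V] (G : SimpleGraph V) (v : V) : ℕ :=
  letI := Classical.decEq V
  letI := Classical.decRel G.Adj
  G.degree v

/-- The degree sequence of a graph on `Fin N`, arranged in decreasing order. -/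
noncomputable def degSeq {N : ℕ} (G : SimpleGraph (Fin N)) : List ℕ :=
  ((Finset.univ.val.map (deg G)).sort (· ≤ ·)).reverse

/-- Generalized (prefix-sum) majorization: `X ≼ Y`. -/
def Maj (X Y : List ℕ) : Prop := ∀ j : ℕ, (X.take j).sum ≤ (Y.take j).sum

/-- A basic tree transfer: choose an edge `{v,w}` with `deg v ≥ 2` and a vertex `u ≠ v` with
`deg u ≥ deg v` lying in the same connected component as `v` after deleting the edge `{v,w}`;
delete the edge `{v,w}` and add the edge `{u,w}`. -/
def BasicTreeTransfer {V : Type*} [Fintype V] (T T' : SimpleGraph V) : Prop :=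
  ∃ v w u : V, T.Adj v w ∧ 2 ≤ deg T v ∧ u ≠ v ∧ deg T v ≤ deg T u ∧
    (T.deleteEdges {s(v, w)}).Reachable u v ∧
    T' = (T.deleteEdges {s(v, w)}) ⊔ SimpleGraph.fromEdgeSet {s(u, w)}

/-- The decreasing rearrangement of a list of naturals. -/
noncomputable def sortDesc (l : List ℕ) : List ℕ :=
  (Multiset.sort (↑l : Multiset ℕ) (· ≤ ·)).reverse

/-- A path (chain) graph: a tree in which every vertex has degree at most 2. -/
def IsPathGraph {V : Type*} [Fintype V] (G : SimpleGraph V) : Prop :=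
  G.IsTree ∧ ∀ v, deg G v ≤ 2

/-- The degree sequence of the chain on `N ≥ 2` vertices: `(2,…,2,1,1)`. -/
def chainSeq (N : ℕ) : List ℕ := List.replicate (N - 2) 2 ++ List.replicate 2 1

/-- A basic transfer on a decreasing list: add 1 to entry `i`, subtract 1 from entry `j ≥ 1`,
and rearrange in decreasing order. -/
def BasicTransfer (X Y : List ℕ) : Prop :=
  ∃ i j : ℕ, i < X.length ∧ j < X.length ∧ i ≠ j ∧ 1 ≤ X.getD j 0 ∧
    Y = sortDesc ((X.set i (X.getD i 0 + 1)).set j (X.getD j 0 - 1))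

open SimpleGraph

-- degree positivity
lemma my_deg_pos {N : ℕ} (hN : 2 ≤ N) (M : SimpleGraph (Fin N)) (hM : M.Connected)
    (v : Fin N) : 1 ≤ deg M v := by
  letI := Classical.decEq (Fin N)
  letI := Classical.decRel M.Adj
  show 1 ≤ M.degree v
  rw [Nat.one_le_iff_ne_zero, ← Nat.pos_iff_ne_zero, M.degree_pos_iff_exists_adj]
  have hvw : ∃ w : Fin N, w ≠ v := by
    obtain ⟨w, hw⟩ := Fintype.exists_ne_of_one_lt_card (by simp; omega) v
    exact ⟨w, hw⟩
  obtain ⟨w, hw⟩ := hvw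
  obtain ⟨p⟩ := hM v w
  cases p with
  | nil => exact absurd rfl hw.symm
  | cons h q => exact ⟨_, h⟩

-- edge count lower bound
lemma my_card_edges {N : ℕ} (hN : 2 ≤ N) (M : SimpleGraph (Fin N)) (hM : M.Connected) :
    letI := Classical.decEq (Fin N)
    letI := Classical.decRel M.Adj
    N - 1 ≤ M.edgeFinset.card := by
  letI := Classical.decEq (Fin N)
  letI := Classical.decRel M.Adj
  set d : Fin N := ⟨0, by omega⟩ with hd
  have key : ∀ w : Fin N, w ≠ d → ∃ x, M.Adj w x ∧ M.dist x d < M.dist w d := by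
    intro w hw
    obtain ⟨p, hp⟩ := hM.exists_walk_length_eq_dist w d
    cases p with
    | nil => exact absurd rfl hw
    | cons h q =>
      refine ⟨_, h, lt_of_le_of_lt (SimpleGraph.dist_le q) ?_⟩
      rw [← hp]; simp
  choose nxt hadj hdist using key
  classical
  have := Finset.card_le_card_of_injOn
    (f := fun w => if h : w = d then s(d, d) else s(w, nxt w h))
    (s := Finset.univ.erase d) (t := M.edgeFinset) ?_ ?_
  · simpa [Finset.card_erase_of_mem] using this
  · intro a ha
    rw [Finset.mem_coe, Finset.mem_erase] at ha
    simp only [Finset.mem_coe, dif_neg ha.1, mem_edgeFinset, mem_edgeSet]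
    exact hadj a ha.1
  · intro a ha b hb hab
    rw [Finset.mem_coe, Finset.mem_erase] at ha hb
    simp only [dif_neg ha.1, dif_neg hb.1, Sym2.eq_iff] at hab
    rcases hab with ⟨h1, _⟩ | ⟨h1, h2⟩
    · exact h1
    · exfalso
      have ha2 := hdist a ha.1
      have hb2 := hdist b hb.1
      rw [h2] at ha2; rw [← h1] at hb2; omega

lemma my_sum_deg {N : ℕ} (hN : 2 ≤ N) (M : SimpleGraph (Fin N)) (hM : M.Connected) :
    2 * (N - 1) ≤ ∑ v, deg M v := by
  letI := Classical.decEq (Fin N)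
  letI := Classical.decRel M.Adj
  have h1 : ∀ v, deg M v = M.degree v := fun _ => rfl
  simp only [h1]
  rw [SimpleGraph.sum_degrees_eq_twice_card_edges M]
  have := my_card_edges hN M hM
  omega

-- degSeq facts
lemma degSeq_length {N : ℕ} (M : SimpleGraph (Fin N)) : (degSeq M).length = N := by
  simp [degSeq, Multiset.length_sort]

lemma degSeq_sum {N : ℕ} (M : SimpleGraph (Fin N)) : (degSeq M).sum = ∑ v, deg M v := by
  rw [degSeq, List.sum_reverse]
  rw [show ((Finset.univ.val.map (deg M)).sort (· ≤ ·)).sum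
      = ((((Finset.univ.val.map (deg M)).sort (· ≤ ·)) : Multiset ℕ)).sum from rfl]
  rw [Multiset.sort_eq]
  rfl

lemma degSeq_mem {N : ℕ} (M : SimpleGraph (Fin N)) (a : ℕ) :
    a ∈ degSeq M ↔ ∃ v, deg M v = a := by
  simp [degSeq, Multiset.mem_sort, List.mem_ofFn, Set.mem_range]

lemma degSeq_sorted {N : ℕ} (M : SimpleGraph (Fin N)) : (degSeq M).Pairwise (· ≥ ·) := by
  rw [degSeq, List.pairwise_reverse]
  exact List.Pairwise.imp (fun h => h) (Multiset.pairwise_sort _ (· ≤ ·))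

-- chainSeq facts
lemma chainSeq_length {N : ℕ} (hN : 2 ≤ N) : (chainSeq N).length = N := by
  simp [chainSeq]; omega

lemma chainSeq_sum {N : ℕ} (hN : 2 ≤ N) : (chainSeq N).sum = 2 * N - 2 := by
  simp [chainSeq, List.sum_replicate, smul_eq_mul]; omega

lemma chainSeq_mem {N : ℕ} {x : ℕ} (hx : x ∈ chainSeq N) : 1 ≤ x ∧ x ≤ 2 := by
  rcases List.mem_append.1 hx with h | h <;>
    simp [List.eq_of_mem_replicate h]

-- generic majorization lemma
lemma maj_of_facts {N : ℕ} (hN : 2 ≤ N) (D : List ℕ) (hlen : D.length = N)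
    (hsort : D.Pairwise (· ≥ ·)) (hpos : ∀ x ∈ D, 1 ≤ x)
    (hsum : 2 * N - 2 ≤ D.sum) : Maj (chainSeq N) D := by
  intro j
  rcases le_or_gt N j with hj | hj
  · -- take everything
    rw [List.take_of_length_le (by rw [chainSeq_length hN]; exact hj),
        List.take_of_length_le (by rw [hlen]; exact hj), chainSeq_sum hN]
    exact hsum
  · -- j < N
    have hsplitD : (D.take j).sum + (D.drop j).sum = D.sum := by
      rw [← List.sum_append, List.take_append_drop]
    have hsplitC : ((chainSeq N).take j).sum + ((chainSeq N).drop j).sum = 2 * N - 2 := by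
      rw [← List.sum_append, List.take_append_drop, chainSeq_sum hN]
    have hlenCt : ((chainSeq N).take j).length = j := by
      rw [List.length_take, chainSeq_length hN]; omega
    have hlenDt : ((D.take j)).length = j := by
      rw [List.length_take, hlen]; omega
    have hCtake_le : ((chainSeq N).take j).sum ≤ 2 * j := by
      have := List.sum_le_card_nsmul ((chainSeq N).take j) 2
        (fun x hx => (chainSeq_mem (List.mem_of_mem_take hx)).2)
      rw [hlenCt, smul_eq_mul] at this; omega
    have hCdrop_ge : N - j ≤ ((chainSeq N).drop j).sum := by
      have := List.card_nsmul_le_sum (l := (chainSeq N).drop j) (n := 1)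
        (fun x hx => (chainSeq_mem (List.mem_of_mem_drop hx)).1)
      rw [List.length_drop, chainSeq_length hN, smul_eq_mul, mul_one] at this
      exact this
    by_cases hc : ∀ x ∈ D.take j, 2 ≤ x
    · have : 2 * j ≤ (D.take j).sum := by
        have := List.card_nsmul_le_sum (l := D.take j) (n := 2) hc
        rw [hlenDt, smul_eq_mul] at this; omega
      omega
    · push_neg at hc
      obtain ⟨x, hxmem, hx1⟩ := hc
      have hDdrop_le : ((D.drop j)).sum ≤ N - j := by
        have hle : ∀ y ∈ D.drop j, y ≤ 1 := fun y hy =>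
          le_trans (hsort.rel_of_mem_take_of_mem_drop hxmem hy) (by omega)
        have := List.sum_le_card_nsmul (D.drop j) 1 hle
        rw [List.length_drop, hlen, smul_eq_mul, mul_one] at this
        exact this
      omega

lemma my_acyclic {N : ℕ} (hN : 2 ≤ N) (M : SimpleGraph (Fin N)) (hM : M.Connected)
    (hsum : ∑ v, deg M v = 2 * N - 2) : M.IsAcyclic := by
  by_contra h
  rw [isAcyclic_iff_forall_adj_isBridge] at h
  push_neg at h
  obtain ⟨v, w, hadj, hnb⟩ := h
  rw [isBridge_iff] at hnb
  have hreach : (M \ fromEdgeSet {s(v, w)}).Reachable v w := by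
    by_contra hr; exact hnb hr
  set G' : SimpleGraph (Fin N) := M.deleteEdges {s(v, w)} with hG'
  have hreach' : G'.Reachable v w := hreach
  have hG'adj : ∀ x y : Fin N, G'.Adj x y ↔ M.Adj x y ∧ s(x, y) ≠ s(v, w) := by
    intro x y; rw [hG', deleteEdges_adj]; simp
  have claim : ∀ a b : Fin N, M.Walk a b → G'.Reachable a b := by
    intro a b p
    induction p with
    | nil => exact Reachable.refl _
    | @cons x y z h p ih =>
      refine Reachable.trans ?_ ih
      by_cases he : s(x, y) = s(v, w)
      · rcases Sym2.eq_iff.1 he with ⟨rfl, rfl⟩ | ⟨rfl, rfl⟩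
        · exact hreach'
        · exact hreach'.symm
      · exact SimpleGraph.Adj.reachable ((hG'adj x y).2 ⟨h, he⟩)
  have hG'conn : G'.Connected := by
    haveI : Nonempty (Fin N) := ⟨⟨0, by omega⟩⟩
    refine SimpleGraph.Connected.mk fun a b => ?_
    obtain ⟨p⟩ := hM a b
    exact claim a b p
  have hbound := my_sum_deg hN G' hG'conn
  -- compute sums of degrees via edge counts
  letI := Classical.decEq (Fin N)
  letI := Classical.decRel M.Adj
  letI := Classical.decRel G'.Adj
  have h1 : ∀ u, deg M u = M.degree u := fun _ => rfl
  have h2 : ∀ u, deg G' u = G'.degree u := fun _ => rfl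
  have hsumM : ∑ u, M.degree u = 2 * M.edgeFinset.card :=
    SimpleGraph.sum_degrees_eq_twice_card_edges M
  have hsumG' : ∑ u, G'.degree u = 2 * G'.edgeFinset.card :=
    SimpleGraph.sum_degrees_eq_twice_card_edges G'
  simp only [h1] at hsum
  simp only [h2] at hbound
  rw [hsumG'] at hbound
  rw [hsumM] at hsum
  have hEG' : G'.edgeFinset = M.edgeFinset.erase s(v, w) := by
    ext e
    simp only [mem_edgeFinset, hG', edgeSet_deleteEdges, Set.mem_diff, Set.mem_singleton_iff,
      Finset.mem_erase, mem_edgeFinset]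
    tauto
  have hmemE : s(v, w) ∈ M.edgeFinset := by rw [mem_edgeFinset]; exact hadj
  have hcard : G'.edgeFinset.card = M.edgeFinset.card - 1 := by
    rw [hEG', Finset.card_erase_of_mem hmemE]
  have hpos : 1 ≤ M.edgeFinset.card := Finset.card_pos.2 ⟨_, hmemE⟩
  omega

lemma my_path_of_eq {N : ℕ} (hN : 2 ≤ N) (M : SimpleGraph (Fin N)) (hM : M.Connected)
    (heq : chainSeq N = degSeq M) : IsPathGraph M := by
  have hdeg2 : ∀ v, deg M v ≤ 2 := by
    intro v
    have : deg M v ∈ degSeq M := (degSeq_mem M _).2 ⟨v, rfl⟩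
    rw [← heq] at this
    exact (chainSeq_mem this).2
  have hsum : ∑ v, deg M v = 2 * N - 2 := by
    rw [← degSeq_sum, ← heq, chainSeq_sum hN]
  exact ⟨⟨hM, my_acyclic hN M hM hsum⟩, hdeg2⟩

/-- the degree sequence of the chain on `N` vertices is strictly majorized by the
degree sequence of any connected `N`-vertex graph that is not a path. -/
theorem stmt_6 {N : ℕ} (hN : 2 ≤ N) (M : SimpleGraph (Fin N)) (hM : M.Connected)
    (hnp : ¬ IsPathGraph M) :
    Maj (chainSeq N) (degSeq M) ∧ chainSeq N ≠ degSeq M := by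
  constructor
  · refine maj_of_facts hN (degSeq M) (degSeq_length M) (degSeq_sorted M) ?_ ?_
    · intro x hx
      obtain ⟨v, rfl⟩ := (degSeq_mem M x).1 hx
      exact my_deg_pos hN M hM v
    · rw [degSeq_sum]
      have := my_sum_deg hN M hM
      omega
  · intro heq
    exact hnp (my_path_of_eq hN M hM heq)
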